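/- Let T, X ⊆ ℝ, let φ : ℝ → ℝ be a function such that y ↦ φ(Real.exp y) is convex on ℝ, let D : ℝ → ℝ be strictly decreasing on T with D(t) > 0 for all t ∈ T, and let v : ℝ → ℝ be strictly increasing on X with v(x) > 0 for all x ∈ X. Then for all t₁ < t₂ in T and x₁ > x₂ in X, φ(D(t₁) * v(x₁)) + φ(D(t₂) * v(x₂)) ≥ φ(D(t₁) * v(x₂)) + φ(D(t₂) * v(x₁)). -/

import Mathlib

lemma aux_rearrange {f : ℝ → ℝ} (hf : ConvexOn ℝ Set.univ f) {p q s t : ℝ}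
    (hps : p ≤ s) (hsq : s ≤ q) (hsum : s + t = p + q) :
    f s + f t ≤ f p + f q := by
  rcases eq_or_lt_of_le (hps.trans hsq) with h | hpq
  · have hs : s = p := le_antisymm (h ▸ hsq) hps
    have ht : t = q := by linarith
    rw [hs, ht]
  · set l : ℝ := (s - p) / (q - p) with hl
    have hqp : 0 < q - p := by linarith
    have hl0 : 0 ≤ l := div_nonneg (by linarith) hqp.le
    have hl1 : l ≤ 1 := (div_le_one hqp).2 (by linarith)
    have hsval : (1 - l) • p + l • q = s := by
      field_simp [hl]
      have hlq : l * (q - p) = s - p := by rw [hl]; exact div_mul_cancel₀ _ hqp.ne'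
      linear_combination hlq
    have htval : l • p + (1 - l) • q = t := by
      have : t = p + q - s := by linarith
      rw [this]; field_simp [hl]
      have hlq : l * (q - p) = s - p := by rw [hl]; exact div_mul_cancel₀ _ hqp.ne'
      linear_combination -hlq
    have h1 := hf.2 (Set.mem_univ p) (Set.mem_univ q) (by linarith : (0:ℝ) ≤ 1 - l) hl0 (by ring)
    have h2 := hf.2 (Set.mem_univ p) (Set.mem_univ q) hl0 (by linarith : (0:ℝ) ≤ 1 - l) (by ring)
    rw [hsval] at h1
    rw [htval] at h2
    simp only [smul_eq_mul] at h1 h2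
    linarith

theorem stmt_12 (T X : Set ℝ) (φ D v : ℝ → ℝ)
    (hφ : ConvexOn ℝ Set.univ (fun y => φ (Real.exp y)))
    (hD : StrictAntiOn D T) (hDpos : ∀ t ∈ T, 0 < D t)
    (hv : StrictMonoOn v X) (hvpos : ∀ x ∈ X, 0 < v x) :
    ∀ t₁ ∈ T, ∀ t₂ ∈ T, t₁ < t₂ → ∀ x₁ ∈ X, ∀ x₂ ∈ X, x₂ < x₁ →
      φ (D t₁ * v x₁) + φ (D t₂ * v x₂) ≥ φ (D t₁ * v x₂) + φ (D t₂ * v x₁) := by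
  intro t₁ ht₁ t₂ ht₂ ht x₁ hx₁ x₂ hx₂ hx
  have hD1 := hDpos t₁ ht₁
  have hD2 := hDpos t₂ ht₂
  have hv1 := hvpos x₁ hx₁
  have hv2 := hvpos x₂ hx₂
  have hDlt : D t₂ < D t₁ := hD ht₁ ht₂ ht
  have hvlt : v x₂ < v x₁ := hv hx₂ hx₁ hx
  have hlogD : Real.log (D t₂) ≤ Real.log (D t₁) := (Real.log_le_log_iff hD2 hD1).2 hDlt.le
  have hlogv : Real.log (v x₂) ≤ Real.log (v x₁) := (Real.log_le_log_iff hv2 hv1).2 hvlt.le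
  have key := aux_rearrange hφ
    (p := Real.log (D t₂) + Real.log (v x₂))
    (q := Real.log (D t₁) + Real.log (v x₁))
    (s := Real.log (D t₁) + Real.log (v x₂))
    (t := Real.log (D t₂) + Real.log (v x₁))
    (by linarith) (by linarith) (by ring)
  simp only [Real.exp_add, Real.exp_log hD1, Real.exp_log hD2, Real.exp_log hv1,
    Real.exp_log hv2] at key
  linarith
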